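/- For every n ≥ 2, let A = A(5) be the torus-braid monodromy matrix of size n over ZMod 8 with T = 5 (corresponding to the Alexander quandle ℤ₈[T,T^{-1}]/(T−5)). Then the color period of A (the least positive integer p with A^p = I) equals 2n. -/

import Mathlib

/-- The torus-braid monodromy matrix `A(T)`: the `n × n` matrix (rows and
columns indexed by `Fin n`, i.e. `0,…,n−1` instead of `1,…,n`) with
`A_{i,i+1} = T` for `i < n−1`, last row `(1, 1−T, …, 1−T)`, and all other
entries `0`. -/
def torusMatrix (R : Type*) [CommRing R] (n : ℕ) (T : R) :
    Matrix (Fin n) (Fin n) R :=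
  Matrix.of fun i j =>
    if (i : ℕ) = n - 1 then (if (j : ℕ) = 0 then 1 else 1 - T)
    else if (j : ℕ) = (i : ℕ) + 1 then T else 0

open Fin.NatCast

section Aux
variable (n : ℕ) [NeZero n]

/-- cyclic shift matrix -/
def Cm : Matrix (Fin n) (Fin n) (ZMod 8) :=
  Matrix.of fun i j => if j = i + 1 then 1 else 0

/-- all-ones last row matrix -/
def Nm : Matrix (Fin n) (Fin n) (ZMod 8) :=
  Matrix.of fun i j => if (i : ℕ) = n - 1 then 1 else 0

lemma Nm_mul_Cm : Nm n * Cm n = Nm n := by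
  ext i j
  simp only [Matrix.mul_apply, Nm, Cm, Matrix.of_apply]
  by_cases h : (i : ℕ) = n - 1
  · simp only [h, if_true, one_mul]
    have key : ∀ k : Fin n, (if j = k + 1 then (1 : ZMod 8) else 0)
        = if k = j - 1 then 1 else 0 := by
      intro k
      congr 1
      simp only [eq_iff_iff]
      rw [eq_sub_iff_add_eq, eq_comm]
    rw [Finset.sum_congr rfl fun k _ => key k]
    simp [Finset.sum_ite_eq']
  · simp [h]

lemma Nm_mul_Nm : Nm n * Nm n = Nm n := by
  ext i j
  simp only [Matrix.mul_apply, Nm, Matrix.of_apply]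
  by_cases h : (i : ℕ) = n - 1
  · simp only [h, if_true, one_mul]
    have key : ∀ k : Fin n, ((k : ℕ) = n - 1) ↔ k = ⟨n - 1, by
        have := NeZero.pos n; omega⟩ := by
      intro k; rw [Fin.ext_iff]
    have : ∀ k : Fin n, (if (k : ℕ) = n - 1 then (1 : ZMod 8) else 0)
        = if k = ⟨n - 1, by have := NeZero.pos n; omega⟩ then 1 else 0 := by
      intro k; congr 1; simp only [eq_iff_iff]; exact key k
    rw [Finset.sum_congr rfl fun k _ => this k]
    simp [Finset.sum_ite_eq']
  · simp [h]

lemma Cm_pow (p : ℕ) : Cm n ^ p =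
    Matrix.of fun i j => if j = i + (p : Fin n) then 1 else 0 := by
  induction p with
  | zero =>
    ext i j
    simp [Matrix.one_apply, eq_comm]
  | succ p ih =>
    rw [pow_succ, ih]
    ext i j
    simp only [Matrix.mul_apply, Cm, Matrix.of_apply, ite_mul, one_mul, zero_mul]
    rw [Finset.sum_ite_eq' Finset.univ (i + (p : Fin n))]
    simp only [Finset.mem_univ, if_true]
    congr 1
    simp only [eq_iff_iff]
    push_cast
    rw [add_assoc]

lemma torus_decomp (hn : 2 ≤ n) :
    torusMatrix (ZMod 8) n 5 = (5 : ZMod 8) • Cm n + (4 : ZMod 8) • Nm n := by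
  ext i j
  simp only [torusMatrix, Cm, Nm, Matrix.add_apply, Matrix.smul_apply,
    Matrix.of_apply, smul_eq_mul]
  by_cases h : (i : ℕ) = n - 1
  · simp only [h, if_true, mul_one]
    have hi1 : i + 1 = 0 := by
      have hn' : (i : ℕ) + 1 = n := by omega
      rw [Fin.ext_iff]
      simp [Fin.add_def, hn', Fin.val_one', Nat.mod_eq_of_lt (by omega : 1 < n)]
    have hcond : (j = i + 1) = ((j : ℕ) = 0) := by
      rw [hi1]
      exact propext (Fin.ext_iff.trans (by simp))
    simp only [hcond]
    split_ifs <;> decide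
  · simp only [h, if_false]
    have hlt : (i : ℕ) + 1 < n := by have := i.isLt; omega
    have hcond : ((j : ℕ) = (i : ℕ) + 1) = (j = i + 1) := by
      apply propext
      rw [Fin.ext_iff, Fin.add_def]
      simp [Fin.val_one', Nat.mod_eq_of_lt (by omega : 1 < n),
        Nat.mod_eq_of_lt hlt]
    simp only [hcond]
    split_ifs <;> ring

lemma four_mul_five_pow (p : ℕ) : (4 : ZMod 8) * 5 ^ p = 4 := by
  induction p with
  | zero => decide
  | succ p ih => rw [pow_succ, ← mul_assoc, mul_comm (4 : ZMod 8) (5 ^ p : ZMod 8),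
      mul_assoc, show (4 : ZMod 8) * 5 = 4 by decide, mul_comm, ih]

lemma torus_pow (hn : 2 ≤ n) (p : ℕ) :
    torusMatrix (ZMod 8) n 5 ^ p
      = (5 : ZMod 8) ^ p • Cm n ^ p
        + (4 : ZMod 8) • ((∑ a ∈ Finset.range p, Cm n ^ a) * Nm n) := by
  induction p with
  | zero => simp
  | succ p ih =>
    rw [pow_succ, ih, torus_decomp n hn]
    rw [add_mul, mul_add, mul_add]
    rw [smul_mul_assoc, smul_mul_assoc, smul_mul_assoc, smul_mul_assoc,
      mul_smul_comm, mul_smul_comm, mul_smul_comm, mul_smul_comm,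
      smul_smul, smul_smul, smul_smul, smul_smul]
    rw [show (4 : ZMod 8) * 4 = 0 by decide, zero_smul, add_zero]
    rw [show (5 : ZMod 8) ^ p * 5 = 5 ^ (p + 1) by rw [pow_succ]]
    rw [show (5 : ZMod 8) ^ p * 4 = 4 by rw [mul_comm]; exact four_mul_five_pow p]
    rw [show (4 : ZMod 8) * 5 = 4 by decide]
    rw [mul_assoc, Nm_mul_Cm]
    rw [← pow_succ]
    rw [Finset.sum_range_succ, add_mul, smul_add]
    abel

end Aux

section Aux2
variable (n : ℕ) [NeZero n]

lemma Cm_pow_n : Cm n ^ n = 1 := by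
  rw [Cm_pow]
  ext i j
  simp [Matrix.one_apply, Fin.natCast_self, eq_comm]

lemma sum_range_add_pow (k : ℕ) :
    ∑ a ∈ Finset.range (n + k), Cm n ^ a
      = ∑ a ∈ Finset.range n, Cm n ^ a + ∑ a ∈ Finset.range k, Cm n ^ a := by
  induction k with
  | zero => simp
  | succ k ih =>
    rw [← Nat.add_assoc, Finset.sum_range_succ, ih, Finset.sum_range_succ,
      pow_add, Cm_pow_n, one_mul, add_assoc]

lemma SnN_apply (i j : Fin n) :
    ((∑ a ∈ Finset.range n, Cm n ^ a) * Nm n) i j = 1 := by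
  have hn0 : 0 < n := NeZero.pos n
  set lastF : Fin n := ⟨n - 1, by omega⟩ with hlast
  have hN : ∀ k : Fin n, Nm n k j = if k = lastF then 1 else 0 := by
    intro k
    simp only [Nm, Matrix.of_apply]
    congr 1
    exact propext ⟨fun h => Fin.ext h, fun h => by rw [h]⟩
  simp only [Matrix.mul_apply]
  rw [Finset.sum_congr rfl fun k _ => by rw [hN k]]
  simp only [mul_ite, mul_one, mul_zero]
  rw [Finset.sum_ite_eq' Finset.univ lastF]
  simp only [Finset.mem_univ, if_true]
  rw [Matrix.sum_apply]
  have key : ∀ a ∈ Finset.range n,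
      (Cm n ^ a) i lastF = if a = ((lastF - i : Fin n) : ℕ) then 1 else 0 := by
    intro a ha
    rw [Finset.mem_range] at ha
    rw [Cm_pow, Matrix.of_apply]
    congr 1
    apply propext
    constructor
    · intro h
      have : (a : Fin n) = lastF - i := by
        rw [eq_sub_iff_add_eq, add_comm, ← h]
      rw [← this, Fin.val_cast_of_lt ha]
    · intro h
      have : (a : Fin n) = lastF - i := by
        rw [Fin.ext_iff, Fin.val_cast_of_lt ha, h]
      rw [this]
      exact (add_sub_cancel _ _).symm
  rw [Finset.sum_congr rfl key, Finset.sum_ite_eq' (Finset.range n)]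
  simp [Fin.is_lt]

end Aux2


/-- For the Alexander quandle `ℤ₈[T,T⁻¹]/(T−5)` (i.e. `ZMod 8` with `T = 5`)
and every `n ≥ 2`, the color period (the least positive `p` with
`A(5)^p = 1`) equals `2n`. -/
theorem colorPeriod_Z8_T5 (n : ℕ) (hn : 2 ≤ n) :
    IsLeast {p : ℕ | 0 < p ∧ torusMatrix (ZMod 8) n 5 ^ p = 1} (2 * n) := by
  have : NeZero n := ⟨by omega⟩
  constructor
  · refine ⟨by omega, ?_⟩
    rw [torus_pow n hn]
    have h5 : (5 : ZMod 8) ^ (2 * n) = 1 := by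
      rw [pow_mul, show (5 : ZMod 8) ^ 2 = 1 by decide, one_pow]
    have hC : Cm n ^ (2 * n) = 1 := by
      rw [pow_mul', Cm_pow_n, one_pow]
    rw [h5, hC, one_smul, two_mul, sum_range_add_pow, add_mul, smul_add,
      ← add_smul, show (4 : ZMod 8) + 4 = 0 by decide, zero_smul, add_zero]
  · rintro p ⟨hp, heq⟩
    have hfor := (torus_pow n hn p).symm.trans heq
    rw [Cm_pow] at hfor
    have hpz : (p : Fin n) = 0 := by
      by_contra hne
      have h00 := congrFun (congrFun hfor 0) 0
      simp only [Matrix.add_apply, Matrix.smul_apply, Matrix.of_apply,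
        smul_eq_mul, Matrix.one_apply_eq, zero_add] at h00
      rw [if_neg (fun h => hne h.symm), mul_zero, zero_add] at h00
      have h2 := congrArg (2 * ·) h00
      simp only [← mul_assoc, show (2 : ZMod 8) * 4 = 0 by decide,
        zero_mul] at h2
      exact absurd h2 (by decide)
    obtain ⟨q, hq⟩ := (Fin.natCast_eq_zero).mp hpz
    have hq1 : 1 ≤ q := by
      rcases Nat.eq_zero_or_pos q with h | h
      · subst h; simp at hq; omega
      · exact h
    rcases eq_or_lt_of_le hq1 with h1 | h2
    · exfalso
      have hpn : p = n := by rw [hq, ← h1, mul_one]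
      rw [hpn] at hfor
      have h01 := congrFun (congrFun hfor 0) 1
      have h10 : (0 : Fin n) ≠ 1 := by
        intro h
        have := congrArg Fin.val h
        rw [Fin.val_one', Nat.mod_eq_of_lt (by omega : 1 < n)] at this
        simp at this
      simp only [Matrix.add_apply, Matrix.smul_apply, Matrix.of_apply,
        smul_eq_mul, Matrix.one_apply_ne h10, zero_add, Fin.natCast_self] at h01
      rw [if_neg (by simpa using h10.symm), mul_zero, zero_add,
        SnN_apply n 0 1] at h01
      exact absurd h01 (by decide)
    · have : 2 ≤ q := h2
      calc 2 * n = n * 2 := by ring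
        _ ≤ n * q := Nat.mul_le_mul_left n this
        _ = p := hq.symm
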